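/- The braid-cyclic group preserves tree-like subgroups of the free group: if H is a tree-like subgroup of F_N and φ is any element of BC_N (in particular φ = λ or φ = u_k^{±1}), then the image φ(H) is again a tree-like subgroup of F_N. -/

import Mathlib

/-- The endomorphism `λ` of the free group `F_N` on generators indexed by `ZMod N`,
sending `s_k` to `s_{(k+1) mod N}`. -/
noncomputable def lamHom (N : ℕ) : FreeGroup (ZMod N) →* FreeGroup (ZMod N) :=
  FreeGroup.lift fun k => FreeGroup.of (k + 1)

/-- The endomorphism `u_k` of the free group `F_N`, sending `s_{k-1} ↦ s_k`,
`s_k ↦ s_k⁻¹ s_{k-1} s_k`, and `s_l ↦ s_l` for `l ∉ {k-1, k}` (indices mod `N`). -/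
noncomputable def uHom (N : ℕ) (k : ℕ) : FreeGroup (ZMod N) →* FreeGroup (ZMod N) :=
  FreeGroup.lift fun l =>
    if l = (k : ZMod N) - 1 then FreeGroup.of (k : ZMod N)
    else if l = (k : ZMod N) then
      (FreeGroup.of (k : ZMod N))⁻¹ * FreeGroup.of ((k : ZMod N) - 1) *
        FreeGroup.of (k : ZMod N)
    else FreeGroup.of l

/-- The permutation of the right coset space `H\G` induced by right multiplication
by `g`. -/
def rightMulMap {G : Type*} [Group G] (H : Subgroup G) (g : G) :
    Quotient (QuotientGroup.rightRel H) → Quotient (QuotientGroup.rightRel H) :=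
  Quotient.map' (fun x => x * g) (by
    intro a b hab
    rw [QuotientGroup.rightRel_apply] at hab ⊢
    simpa [mul_assoc] using hab)

/-- `f` is a transposition: it exchanges two distinct points and fixes all others. -/
def IsTransposition {X : Type*} (f : X → X) : Prop :=
  ∃ x y : X, x ≠ y ∧ f x = y ∧ f y = x ∧ ∀ z : X, z ≠ x → z ≠ y → f z = z

/-- `H` is a tree-like subgroup of the free group `F_N`: it has index `N+1`, and the
permutations `σ_k` of the right coset space `H\F_N` induced by right multiplication by
the generators `s_k` are transpositions, pairwise distinct (so that the `N` transpositions
form the edge set of a spanning tree on the `N+1` cosets). -/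
def IsTreeLike (N : ℕ) (H : Subgroup (FreeGroup (ZMod N))) : Prop :=
  H.index = N + 1 ∧
  (∀ k : ZMod N, IsTransposition (rightMulMap H (FreeGroup.of k))) ∧
  ∀ k l : ZMod N, k ≠ l →
    rightMulMap H (FreeGroup.of k) ≠ rightMulMap H (FreeGroup.of l)

section Infra

variable {G : Type*} [Group G]

lemma rightMulMap_mk (H : Subgroup G) (g x : G) :
    rightMulMap H g (Quotient.mk'' x) = Quotient.mk'' (x * g) := rfl

lemma rightMulMap_one (H : Subgroup G) : rightMulMap H (1 : G) = id := by
  funext q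
  induction q using Quotient.inductionOn' with
  | h x => simp [rightMulMap_mk]

lemma rightMulMap_mul (H : Subgroup G) (g g' : G) :
    rightMulMap H (g * g') = rightMulMap H g' ∘ rightMulMap H g := by
  funext q
  induction q using Quotient.inductionOn' with
  | h x => simp [rightMulMap_mk, mul_assoc]

lemma rightMulMap_inv_comp (H : Subgroup G) (g : G) :
    rightMulMap H g ∘ rightMulMap H g⁻¹ = id := by
  rw [← rightMulMap_mul, inv_mul_cancel, rightMulMap_one]

lemma rightMulMap_comp_inv (H : Subgroup G) (g : G) :
    rightMulMap H g⁻¹ ∘ rightMulMap H g = id := by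
  rw [← rightMulMap_mul, mul_inv_cancel, rightMulMap_one]

lemma isTransposition_equiv_conj {X Y : Type*} (e : X ≃ Y) {f : X → X}
    (hf : IsTransposition f) : IsTransposition (e ∘ f ∘ e.symm) := by
  obtain ⟨x, y, hxy, h1, h2, h3⟩ := hf
  refine ⟨e x, e y, fun h => hxy (e.injective h), by simp [h1], by simp [h2], ?_⟩
  intro z hz1 hz2
  have hx : e.symm z ≠ x := fun h => hz1 (by rw [← h, Equiv.apply_symm_apply])
  have hy : e.symm z ≠ y := fun h => hz2 (by rw [← h, Equiv.apply_symm_apply])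
  simp [h3 _ hx hy]

/-- The coset space equivalence induced by an automorphism. -/
noncomputable def cosetCongr (ψ : MulAut G) (K : Subgroup G) :
    Quotient (QuotientGroup.rightRel K) ≃
      Quotient (QuotientGroup.rightRel (K.map ψ.toMonoidHom)) :=
  Quotient.congr ψ.toEquiv (by
    intro a b
    rw [QuotientGroup.rightRel_apply, QuotientGroup.rightRel_apply]
    constructor
    · intro h
      refine ⟨b * a⁻¹, h, by simp⟩
    · rintro ⟨x, hx, hxeq⟩
      have : x = b * a⁻¹ := by
        apply ψ.injective
        simpa using hxeq
      rwa [← this])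

lemma cosetCongr_mk (ψ : MulAut G) (K : Subgroup G) (x : G) :
    cosetCongr ψ K (Quotient.mk'' x) = Quotient.mk'' (ψ x) := rfl

lemma rightMulMap_map (ψ : MulAut G) (K : Subgroup G) (g : G) :
    rightMulMap (K.map ψ.toMonoidHom) g
      = (cosetCongr ψ K) ∘ rightMulMap K (ψ.symm g) ∘ (cosetCongr ψ K).symm := by
  have key : ∀ q, rightMulMap (K.map ψ.toMonoidHom) g (cosetCongr ψ K q)
      = cosetCongr ψ K (rightMulMap K (ψ.symm g) q) := by
    intro q
    induction q using Quotient.inductionOn' with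
    | h x =>
      rw [cosetCongr_mk, rightMulMap_mk, rightMulMap_mk, cosetCongr_mk]
      simp
      rfl
  funext q
  have := key ((cosetCongr ψ K).symm q)
  rwa [Equiv.apply_symm_apply] at this

end Infra


private def chainLen {X : Type*} (step : X → X → Prop) : ℕ → X → X → Prop
  | 0, a, b => a = b
  | n+1, a, b => ∃ c, chainLen step n a c ∧ step c b

private lemma chainLen_of_reflTransGen {X : Type*} {step : X → X → Prop} {a b : X}
    (h : Relation.ReflTransGen step a b) : ∃ n, chainLen step n a b := by
  induction h with
  | refl => exact ⟨0, rfl⟩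
  | tail _ hstep ih => obtain ⟨n, hn⟩ := ih; exact ⟨n+1, _, hn, hstep⟩

lemma card_le_of_connected {X : Type*} [Fintype X] [DecidableEq X]
    (T : Finset (Sym2 X)) (r : X)
    (hconn : ∀ q : X, Relation.ReflTransGen (fun a b => s(a,b) ∈ T) r q) :
    Fintype.card X ≤ T.card + 1 := by
  classical
  set step := fun a b : X => s(a,b) ∈ T with hstep
  have hch : ∀ q : X, ∃ n, chainLen step n r q := fun q => chainLen_of_reflTransGen (hconn q)
  set d : X → ℕ := fun q => Nat.find (hch q) with hd
  have key : ∀ q : X, q ≠ r → ∃ p, step p q ∧ d p < d q := by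
    intro q hq
    have hdq : d q ≠ 0 := by
      intro h0
      have hspec := Nat.find_spec (hch q)
      rw [show Nat.find (hch q) = 0 from h0] at hspec
      exact hq hspec.symm
    obtain ⟨m, hm⟩ := Nat.exists_eq_succ_of_ne_zero hdq
    have hspec := Nat.find_spec (hch q)
    rw [show Nat.find (hch q) = m + 1 from hm] at hspec
    obtain ⟨c, hc, hcs⟩ := hspec
    refine ⟨c, hcs, ?_⟩
    have : d c ≤ m := Nat.find_le hc
    omega
  choose p hp hdlt using key
  have hinj : Set.InjOn (fun q : X => if h : q = r then (s(r,r) : Sym2 X) else s(p q h, q))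
      ↑(Finset.univ.erase r) := by
    intro q1 hq1 q2 hq2 heq
    simp only [Finset.coe_erase, Set.mem_diff, Finset.mem_coe, Finset.mem_univ,
      Set.mem_singleton_iff] at hq1 hq2
    have h1 : q1 ≠ r := hq1.2
    have h2 : q2 ≠ r := hq2.2
    simp only [dif_neg h1, dif_neg h2] at heq
    rcases Sym2.eq_iff.mp heq with ⟨hpa, hqa⟩ | ⟨hpa, hqa⟩
    · exact hqa
    · exfalso
      have l1 := hdlt q1 h1
      have l2 := hdlt q2 h2
      rw [hpa] at l1; rw [← hqa] at l2
      omega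
  have hmaps : ∀ q ∈ Finset.univ.erase r,
      (if h : q = r then (s(r,r) : Sym2 X) else s(p q h, q)) ∈ T := by
    intro q hq
    have h1 : q ≠ r := (Finset.mem_erase.mp hq).1
    rw [dif_neg h1]
    exact hp q h1
  have hcard := Finset.card_le_card_of_injOn _ hmaps hinj
  rw [Finset.card_erase_of_mem (Finset.mem_univ r), Finset.card_univ] at hcard
  omega

section Distinct

open FreeGroup

lemma sigma_eq_of_rightMulMap_eq (N : ℕ) (hN : 2 ≤ N) (K : Subgroup (FreeGroup (ZMod N)))
    (hidx : K.index = N + 1)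
    (htr : ∀ k : ZMod N, IsTransposition (rightMulMap K (FreeGroup.of k)))
    {k l : ZMod N} (hkl : k ≠ l)
    (heq : rightMulMap K (FreeGroup.of k) = rightMulMap K (FreeGroup.of l)) : False := by
  classical
  haveI : NeZero N := ⟨by omega⟩
  set Q := Quotient (QuotientGroup.rightRel K) with hQ
  -- cardinality of Q
  have hcardQ : Nat.card Q = N + 1 := by
    have e := QuotientGroup.quotientRightRelEquivQuotientLeftRel K
    rw [Nat.card_congr e]
    rw [← hidx]
    rfl
  haveI : Finite Q := Nat.finite_of_card_ne_zero (by omega)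
  haveI : Fintype Q := Fintype.ofFinite Q
  have hcard : Fintype.card Q = N + 1 := by rw [← Nat.card_eq_fintype_card, hcardQ]
  -- supports
  choose x y hxy h1 h2 h3 using htr
  set ed : ZMod N → Sym2 Q := fun j => s(x j, y j) with hed
  -- support lemma
  have hsupp : ∀ (j : ZMod N) (a b : Q), a ≠ b → rightMulMap K (FreeGroup.of j) a = b →
      s(a, b) = ed j := by
    intro j a b hab hfab
    by_cases hax : a = x j
    · subst hax
      rw [h1 j] at hfab
      rw [← hfab]
    · by_cases hay : a = y j
      · subst hay
        rw [h2 j] at hfab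
        rw [← hfab, hed]
        exact Sym2.eq_swap
      · exact absurd (hfab ▸ (h3 j a hax hay)).symm hab
  have hedkl : ed k = ed l := by
    refine (hsupp l (x k) (y k) (hxy k) ?_).symm ▸ rfl
    · rw [← heq, h1]
  -- edge finset
  set T : Finset (Sym2 Q) := (Finset.univ.erase l).image ed with hT
  have hTcard : T.card ≤ N - 1 := by
    calc T.card ≤ (Finset.univ.erase l).card := Finset.card_image_le
    _ = N - 1 := by rw [Finset.card_erase_of_mem (Finset.mem_univ l), Finset.card_univ, ZMod.card]
  have hedT : ∀ j : ZMod N, ed j ∈ T := by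
    intro j
    by_cases hj : j = l
    · subst hj
      rw [← hedkl]
      exact Finset.mem_image_of_mem ed (Finset.mem_erase.mpr ⟨hkl, Finset.mem_univ k⟩)
    · exact Finset.mem_image_of_mem ed (Finset.mem_erase.mpr ⟨hj, Finset.mem_univ j⟩)
  -- connectivity
  set step := fun a b : Q => s(a, b) ∈ T with hstep
  have hreach : ∀ (g : FreeGroup (ZMod N)) (q : Q),
      Relation.ReflTransGen step q (rightMulMap K g q) := by
    intro g
    induction g using FreeGroup.induction_on with
    | C1 => intro q; rw [rightMulMap_one]; exact Relation.ReflTransGen.refl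
    | of j =>
      intro q
      show Relation.ReflTransGen step q (rightMulMap K (FreeGroup.of j) q)
      by_cases hq : rightMulMap K (FreeGroup.of j) q = q
      · rw [hq]
      · refine Relation.ReflTransGen.single ?_
        show s(q, rightMulMap K (FreeGroup.of j) q) ∈ T
        rw [hsupp j q _ (Ne.symm hq) rfl]
        exact hedT j
    | inv_of j _ =>
      intro q
      show Relation.ReflTransGen step q (rightMulMap K (FreeGroup.of j)⁻¹ q)
      set q' := rightMulMap K (FreeGroup.of j)⁻¹ q with hq'
      have hback : rightMulMap K (FreeGroup.of j) q' = q := by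
        rw [hq', ← Function.comp_apply (f := rightMulMap K (FreeGroup.of j)),
          rightMulMap_inv_comp]
        rfl
      by_cases hqq : q' = q
      · exact hqq ▸ Relation.ReflTransGen.refl
      · refine Relation.ReflTransGen.single ?_
        show s(q, q') ∈ T
        rw [Sym2.eq_swap, hsupp j q' q hqq hback]
        exact hedT j
    | mul a b ha hb =>
      intro q
      show Relation.ReflTransGen step q (rightMulMap K (a * b) q)
      rw [rightMulMap_mul]
      exact (ha q).trans (hb _)
  have hconn : ∀ q : Q, Relation.ReflTransGen step (Quotient.mk'' (1 : FreeGroup (ZMod N))) q := by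
    intro q
    induction q using Quotient.inductionOn' with
    | h g =>
      have := hreach g (Quotient.mk'' 1)
      rwa [rightMulMap_mk, one_mul] at this
  have := card_le_of_connected T (Quotient.mk'' (1 : FreeGroup (ZMod N))) hconn
  omega

end Distinct

section Main

variable {G : Type*} [Group G]

lemma isTransposition_rightMulMap_conj (K : Subgroup G) {g : G}
    (htr : IsTransposition (rightMulMap K g)) (c : G) :
    IsTransposition (rightMulMap K (c * g * c⁻¹)) := by
  have hl : Function.LeftInverse (rightMulMap K c) (rightMulMap K c⁻¹) := by
    intro q
    rw [← Function.comp_apply (f := rightMulMap K c), rightMulMap_inv_comp]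
    rfl
  have hr : Function.RightInverse (rightMulMap K c) (rightMulMap K c⁻¹) := by
    intro q
    rw [← Function.comp_apply (f := rightMulMap K c⁻¹), rightMulMap_comp_inv]
    rfl
  set e : Quotient (QuotientGroup.rightRel K) ≃ Quotient (QuotientGroup.rightRel K) :=
    ⟨rightMulMap K c⁻¹, rightMulMap K c, hl, hr⟩ with he
  have : rightMulMap K (c * g * c⁻¹) = e ∘ rightMulMap K g ∘ e.symm := by
    rw [rightMulMap_mul, rightMulMap_mul]
    rfl
  rw [this]
  exact isTransposition_equiv_conj e htr

/-- The key invariant: index `N+1` and all generator actions are transpositions. -/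
def Good (N : ℕ) (K : Subgroup (FreeGroup (ZMod N))) : Prop :=
  K.index = N + 1 ∧ ∀ k : ZMod N, IsTransposition (rightMulMap K (FreeGroup.of k))

lemma good_map {N : ℕ} (ψ : MulAut (FreeGroup (ZMod N)))
    (hψ : ∀ k : ZMod N, ∃ c j, ψ.symm (FreeGroup.of k) = c * FreeGroup.of j * c⁻¹)
    {K : Subgroup (FreeGroup (ZMod N))} (hK : Good N K) :
    Good N (K.map ψ.toMonoidHom) := by
  constructor
  · have hker : ψ.toMonoidHom.ker ≤ K := by
      rw [(MonoidHom.ker_eq_bot_iff _).mpr ψ.injective]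
      exact bot_le
    exact (Subgroup.index_map_eq K ψ.surjective hker).trans hK.1
  · intro k
    obtain ⟨c, j, hcj⟩ := hψ k
    rw [rightMulMap_map ψ K (FreeGroup.of k), hcj]
    exact isTransposition_equiv_conj _ (isTransposition_rightMulMap_conj K (hK.2 j) c)

end Main

/-- the braid-cyclic group `BC_N` — the subgroup of `Aut(F_N)` generated by
the automorphisms `λ, u_1, …, u_{N-1}` (given as automorphisms `lamA`, `uA k` whose
underlying maps are the endomorphisms `λ` and `u_k`) — preserves tree-like subgroups:
if `H` is a tree-like subgroup of `F_N` and `φ ∈ BC_N` (in particular `φ = λ` or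
`φ = u_k^{±1}`), then the image `φ(H)` is again a tree-like subgroup of `F_N`. -/
theorem stmt_15 (N : ℕ) (hN : 2 ≤ N)
    (lamA : MulAut (FreeGroup (ZMod N))) (hlamA : ⇑lamA = ⇑(lamHom N))
    (uA : ℕ → MulAut (FreeGroup (ZMod N)))
    (huA : ∀ k : ℕ, 1 ≤ k → k ≤ N - 1 → ⇑(uA k) = ⇑(uHom N k))
    (H : Subgroup (FreeGroup (ZMod N))) (hH : IsTreeLike N H)
    (φ : MulAut (FreeGroup (ZMod N)))
    (hφ : φ ∈ Subgroup.closure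
      ({lamA} ∪ {a | ∃ k : ℕ, 1 ≤ k ∧ k ≤ N - 1 ∧ a = uA k})) :
    IsTreeLike N (Subgroup.map φ.toMonoidHom H) := by
  classical
  haveI : NeZero N := ⟨by omega⟩
  haveI : Fact (1 < N) := ⟨by omega⟩
  have h10 : (1 : ZMod N) ≠ 0 := one_ne_zero
  set FG := FreeGroup (ZMod N) with hFG
  -- generator computations
  have hlam_of : ∀ j : ZMod N, lamA (FreeGroup.of j) = FreeGroup.of (j + 1) := by
    intro j
    rw [show lamA (FreeGroup.of j) = lamHom N (FreeGroup.of j) from congrFun hlamA _]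
    simp [lamHom]
  have hsymm : ∀ ψ : MulAut FG, (ψ⁻¹).symm = ψ := by
    intro ψ
    rw [MulAut.inv_def, MulEquiv.symm_symm]
  set P : MulAut FG → Prop := fun ψ => ∀ K : Subgroup FG, Good N K → Good N (K.map ψ.toMonoidHom)
    with hP
  have hgood : ∀ ψ : MulAut FG,
      (∀ k : ZMod N, ∃ c j, ψ.symm (FreeGroup.of k) = c * FreeGroup.of j * c⁻¹) → P ψ :=
    fun ψ h K hK => good_map ψ h hK
  have hP_lam : P lamA := by
    apply hgood
    intro k
    refine ⟨1, k - 1, ?_⟩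
    rw [one_mul, inv_one, mul_one, MulEquiv.symm_apply_eq, hlam_of, sub_add_cancel]
  have hP_lam_inv : P lamA⁻¹ := by
    apply hgood
    intro k
    refine ⟨1, k + 1, ?_⟩
    rw [one_mul, inv_one, mul_one, hsymm, hlam_of]
  have hP_u : ∀ m : ℕ, 1 ≤ m → m ≤ N - 1 → P (uA m) ∧ P (uA m)⁻¹ := by
    intro m hm1 hm2
    have hu : ∀ j : ZMod N, uA m (FreeGroup.of j) =
        if j = (m : ZMod N) - 1 then FreeGroup.of (m : ZMod N)
        else if j = (m : ZMod N) then
          (FreeGroup.of (m : ZMod N))⁻¹ * FreeGroup.of ((m : ZMod N) - 1) *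
            FreeGroup.of (m : ZMod N)
        else FreeGroup.of j := by
      intro j
      rw [show uA m (FreeGroup.of j) = uHom N m (FreeGroup.of j) from congrFun (huA m hm1 hm2) _]
      simp [uHom]
    have hne : (m : ZMod N) - 1 ≠ (m : ZMod N) := by
      intro h
      rw [sub_eq_iff_eq_add] at h
      exact h10 (left_eq_add.mp h)
    constructor
    · apply hgood
      intro k
      by_cases hk1 : k = (m : ZMod N) - 1
      · subst hk1
        refine ⟨FreeGroup.of ((m : ZMod N) - 1), (m : ZMod N), ?_⟩
        rw [MulEquiv.symm_apply_eq, map_mul, map_mul, map_inv, hu, hu, if_pos rfl,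
          if_neg (Ne.symm hne), if_pos rfl]
        group
      · by_cases hk2 : k = (m : ZMod N)
        · subst hk2
          refine ⟨1, (m : ZMod N) - 1, ?_⟩
          rw [one_mul, inv_one, mul_one, MulEquiv.symm_apply_eq, hu, if_pos rfl]
        · refine ⟨1, k, ?_⟩
          rw [one_mul, inv_one, mul_one, MulEquiv.symm_apply_eq, hu, if_neg hk1, if_neg hk2]
    · apply hgood
      intro k
      by_cases hk1 : k = (m : ZMod N) - 1
      · subst hk1
        refine ⟨1, (m : ZMod N), ?_⟩
        rw [one_mul, inv_one, mul_one, hsymm, hu, if_pos rfl]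
      · by_cases hk2 : k = (m : ZMod N)
        · subst hk2
          refine ⟨(FreeGroup.of ((m : ZMod N)))⁻¹, (m : ZMod N) - 1, ?_⟩
          rw [hsymm, hu, if_neg (Ne.symm hne), if_pos rfl, inv_inv]
        · refine ⟨1, k, ?_⟩
          rw [one_mul, inv_one, mul_one, hsymm, hu, if_neg hk1, if_neg hk2]
  -- closure induction
  have hcomp : ∀ a b : MulAut FG, (a * b).toMonoidHom = a.toMonoidHom.comp b.toMonoidHom := by
    intro a b; ext z; rfl
  have hPmul : ∀ a b : MulAut FG, P a → P b → P (a * b) := by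
    intro a b ha hb K hK
    rw [hcomp, ← Subgroup.map_map]
    exact ha _ (hb K hK)
  have hmain : P φ ∧ P φ⁻¹ := by
    refine Subgroup.closure_induction (p := fun x _ => P x ∧ P x⁻¹) ?_ ?_ ?_ ?_ hφ
    · rintro x (hx | ⟨m, hm1, hm2, rfl⟩)
      · rw [Set.mem_singleton_iff] at hx
        subst hx
        exact ⟨hP_lam, hP_lam_inv⟩
      · exact hP_u m hm1 hm2
    · have h1 : P (1 : MulAut FG) := by
        intro K hK
        have : K.map (1 : MulAut FG).toMonoidHom = K := by
          ext z
          simp [Subgroup.mem_map]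
        rwa [this]
      exact ⟨h1, by rw [inv_one]; exact h1⟩
    · intro a b _ _ ha hb
      refine ⟨hPmul a b ha.1 hb.1, ?_⟩
      rw [mul_inv_rev]
      exact hPmul _ _ hb.2 ha.2
    · intro a _ ha
      exact ⟨ha.2, by rw [inv_inv]; exact ha.1⟩
  have hGood : Good N (Subgroup.map φ.toMonoidHom H) := hmain.1 H ⟨hH.1, hH.2.1⟩
  exact ⟨hGood.1, hGood.2, fun k l hkl heq =>
    sigma_eq_of_rightMulMap_eq N hN _ hGood.1 hGood.2 hkl heq⟩
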